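/- The bounded partition polytope {x ≥ 0 : Σ_K x_K rc_K^π ≥ r(π)-1 ∀π, Σ_K x_K(|K|-1) = |R|-1} equals the subtour polytope {x ≥ 0 : Σ_K x_K ρ(K∩S) ≤ ρ(S) ∀S ⊂ R, Σ_K x_K ρ(K) = ρ(R)}, as subsets of ℝ^𝒦. -/

import Mathlib

open Classical

namespace SteinerLP

variable {R : Type*}

/-- Number of parts of a partition (setoid). -/
noncomputable def nparts (s : Setoid R) : ℕ := Nat.card (Quotient s)

/-- Rank contribution of a hyperedge `K` to partition `s`:
the number of parts of `s` met by `K`, minus 1. -/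
noncomputable def rc (s : Setoid R) (K : Set R) : ℕ := (Quotient.mk s '' K).ncard - 1

/-- The rank `ρ(X) = max (0, |X| - 1)` of a set. -/
noncomputable def rho (K : Set R) : ℕ := K.ncard - 1

/-- The part of the partition `s` corresponding to a class `c`. -/
def classOf (s : Setoid R) (c : Quotient s) : Set R := {x | Quotient.mk s x = c}

/-- The merged partition `m(s, S)`: all parts of `s` meeting `S` are merged into one part. -/
def merge (s : Setoid R) (S : Set R) : Setoid R where
  r x y := s.r x y ∨ ((∃ a ∈ S, s.r x a) ∧ (∃ b ∈ S, s.r y b))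
  iseqv := by
    constructor
    · intro x; exact Or.inl (s.iseqv.refl x)
    · intro x y h
      rcases h with h | ⟨ha, hb⟩
      · exact Or.inl (s.iseqv.symm h)
      · exact Or.inr ⟨hb, ha⟩
    · intro x y z hxy hyz
      rcases hxy with hxy | ⟨hx, hy⟩
      · rcases hyz with hyz | ⟨hy, hz⟩
        · exact Or.inl (s.iseqv.trans hxy hyz)
        · refine Or.inr ⟨?_, hz⟩
          rcases hy with ⟨a, haS, hya⟩
          exact ⟨a, haS, s.iseqv.trans hxy hya⟩
      · rcases hyz with hyz | ⟨hy', hz⟩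
        · refine Or.inr ⟨hx, ?_⟩
          rcases hy with ⟨b, hbS, hyb⟩
          exact ⟨b, hbS, s.iseqv.trans (s.iseqv.symm hyz) hyb⟩
        · exact Or.inr ⟨hx, hz⟩

end SteinerLP


namespace SteinerLP

variable {R : Type*} [Fintype R]

noncomputable instance (s : Setoid R) : Fintype (Quotient s) := Fintype.ofFinite _

omit [Fintype R] in
lemma classOf_nonempty (s : Setoid R) (c : Quotient s) : (classOf s c).Nonempty := by
  obtain ⟨a, rfl⟩ := Quotient.exists_rep c
  exact ⟨a, rfl⟩

omit [Fintype R] in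
lemma rho_cast (K : Set R) (hFin : K.Finite) (hK : K.Nonempty) :
    ((rho K : ℝ)) = (K.ncard : ℝ) - 1 := by
  have h : 1 ≤ K.ncard := (Set.ncard_pos hFin).mpr hK
  rw [rho, Nat.cast_sub h, Nat.cast_one]

omit [Fintype R] in
lemma rho_eq_zero (K : Set R) (h : K.ncard ≤ 1) : rho K = 0 := by
  simp [rho, Nat.sub_eq_zero_of_le h]

lemma sum_ncard_inter_classOf (s : Setoid R) (K : Set R) :
    ∑ c : Quotient s, (K ∩ classOf s c).ncard = K.ncard := by
  classical
  rw [Set.ncard_eq_toFinset_card' K,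
    Finset.card_eq_sum_card_fiberwise (f := fun a => Quotient.mk s a) (t := Finset.univ)
      (fun a _ => Finset.mem_univ _)]
  refine Finset.sum_congr rfl fun c _ => ?_
  rw [Set.ncard_eq_toFinset_card' (K ∩ classOf s c)]
  congr 1
  ext a
  simp [Set.mem_toFinset, classOf]; convert Set.mem_toFinset (s := K ∩ {x | ⟦x⟧ = c}) (a := a) <;> first | rfl | (congr; exact Subsingleton.elim _ _)

lemma sum_rho_classes (s : Setoid R) (K : Set R) (hK : K.Nonempty) :
    ∑ c : Quotient s, ((rho (K ∩ classOf s c) : ℝ)) = (K.ncard : ℝ) - 1 - rc s K := by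
  classical
  set T : Finset (Quotient s) := Finset.univ.filter (fun c => (K ∩ classOf s c).Nonempty) with hT
  have hmem : ∀ c, c ∈ T ↔ c ∈ Quotient.mk s '' K := by
    intro c
    simp only [hT, Finset.mem_filter, Finset.mem_univ, true_and, Set.mem_image]
    constructor
    · rintro ⟨a, haK, hac⟩; exact ⟨a, haK, hac⟩
    · rintro ⟨a, haK, hac⟩; exact ⟨a, haK, hac⟩
  have hTcard : T.card = (Quotient.mk s '' K).ncard := by
    rw [Set.ncard_eq_toFinset_card']
    congr 1
    ext c
    rw [Set.mem_toFinset]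
    exact hmem c
  have hT1 : 1 ≤ T.card := by
    obtain ⟨k, hk⟩ := hK
    refine Finset.card_pos.mpr ⟨Quotient.mk s k, ?_⟩
    exact (hmem _).mpr ⟨k, hk, rfl⟩
  have hrc : (rc s K : ℝ) = (T.card : ℝ) - 1 := by
    rw [rc, ← hTcard, Nat.cast_sub hT1, Nat.cast_one]
  have step1 : ∑ c : Quotient s, ((rho (K ∩ classOf s c) : ℝ))
      = ∑ c ∈ T, ((rho (K ∩ classOf s c) : ℝ)) := by
    refine (Finset.sum_subset (Finset.subset_univ T) ?_).symm
    intro c _ hc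
    simp only [hT, Finset.mem_filter, Finset.mem_univ, true_and] at hc
    rw [Set.not_nonempty_iff_eq_empty] at hc
    rw [hc]
    simp [rho]
  have step2 : ∑ c ∈ T, ((rho (K ∩ classOf s c) : ℝ))
      = ∑ c ∈ T, (((K ∩ classOf s c).ncard : ℝ) - 1) := by
    refine Finset.sum_congr rfl fun c hc => ?_
    simp only [hT, Finset.mem_filter, Finset.mem_univ, true_and] at hc
    exact rho_cast _ (Set.toFinite _) hc
  have step3 : ∑ c ∈ T, (((K ∩ classOf s c).ncard : ℝ))
      = ∑ c : Quotient s, (((K ∩ classOf s c).ncard : ℝ)) := by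
    refine Finset.sum_subset (Finset.subset_univ T) ?_
    intro c _ hc
    simp only [hT, Finset.mem_filter, Finset.mem_univ, true_and] at hc
    rw [Set.not_nonempty_iff_eq_empty] at hc
    rw [hc]
    simp
  have step4 : ∑ c : Quotient s, (((K ∩ classOf s c).ncard : ℝ)) = (K.ncard : ℝ) := by
    rw [← Nat.cast_sum, sum_ncard_inter_classOf]
  rw [step1, step2, Finset.sum_sub_distrib, step3, step4, Finset.sum_const, nsmul_eq_mul,
    mul_one, hrc]
  ring

lemma key (s : Setoid R) (x : Set R → ℝ) :
    ∑ K ∈ Finset.univ.filter (fun K : Set R => K.Nonempty), x K * rc s K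
      = (∑ K ∈ Finset.univ.filter (fun K : Set R => K.Nonempty), x K * ((K.ncard : ℝ) - 1))
        - ∑ c : Quotient s, ∑ K ∈ Finset.univ.filter (fun K : Set R => K.Nonempty),
            x K * rho (K ∩ classOf s c) := by
  rw [Finset.sum_comm, ← Finset.sum_sub_distrib]
  refine Finset.sum_congr rfl fun K hK => ?_
  have hKne : K.Nonempty := (Finset.mem_filter.mp hK).2
  rw [← Finset.mul_sum, ← mul_sub, sum_rho_classes s K hKne]
  ring

/-- The partition with one part `S` and all other parts singletons. -/
def sing (S : Set R) : Setoid R where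
  r x y := x = y ∨ (x ∈ S ∧ y ∈ S)
  iseqv := by
    refine ⟨fun x => Or.inl rfl, ?_, ?_⟩
    · rintro x y (rfl | ⟨h1, h2⟩)
      · exact Or.inl rfl
      · exact Or.inr ⟨h2, h1⟩
    · rintro x y z (rfl | ⟨h1, h2⟩) (rfl | ⟨h3, h4⟩) <;> first | exact Or.inl rfl | tauto

omit [Fintype R] in
lemma classOf_sing_mem {S : Set R} {a₀ : R} (ha₀ : a₀ ∈ S) :
    classOf (sing S) (Quotient.mk (sing S) a₀) = S := by
  ext z
  simp only [classOf, Set.mem_setOf_eq]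
  constructor
  · intro h
    have h' : (sing S).r z a₀ := Quotient.exact h
    rcases h' with rfl | ⟨h1, _⟩
    · exact ha₀
    · exact h1
  · intro hz
    exact Quotient.sound (Or.inr ⟨hz, ha₀⟩)

omit [Fintype R] in
lemma classOf_sing_ne {S : Set R} {a₀ : R} (ha₀ : a₀ ∈ S) {c : Quotient (sing S)}
    (hc : c ≠ Quotient.mk (sing S) a₀) : ∃ b, b ∉ S ∧ classOf (sing S) c = {b} := by
  obtain ⟨b, rfl⟩ := Quotient.exists_rep c
  have hb : b ∉ S := fun hbS => hc (Quotient.sound (Or.inr ⟨hbS, ha₀⟩))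
  refine ⟨b, hb, ?_⟩
  ext z
  simp only [classOf, Set.mem_setOf_eq, Set.mem_singleton_iff]
  constructor
  · intro h
    have h' : (sing S).r z b := Quotient.exact h
    rcases h' with rfl | ⟨_, h2⟩
    · rfl
    · exact absurd h2 hb
  · rintro rfl; rfl

lemma nparts_sing_ge {S : Set R} {a₀ : R} (ha₀ : a₀ ∈ S) :
    Fintype.card R + 1 ≤ nparts (sing S) + S.ncard := by
  have hinj : Function.Injective
      (fun b : ↥(insert a₀ Sᶜ) => Quotient.mk (sing S) (b : R)) := by
    rintro ⟨b, hb⟩ ⟨b', hb'⟩ h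
    have h' : (sing S).r b b' := Quotient.exact h
    ext
    rcases h' with rfl | ⟨h1, h2⟩
    · rfl
    · rcases hb with rfl | hb
      · rcases hb' with rfl | hb'
        · rfl
        · exact absurd h2 hb'
      · exact absurd h1 hb
  have hle : (insert a₀ Sᶜ).ncard ≤ nparts (sing S) := by
    have := Nat.card_le_card_of_injective _ hinj
    rwa [Nat.card_coe_set_eq] at this
  have hins : (insert a₀ Sᶜ).ncard = Sᶜ.ncard + 1 :=
    Set.ncard_insert_of_notMem (by simp [ha₀]) (Set.toFinite _)
  have hcompl : S.ncard + Sᶜ.ncard = Fintype.card R := by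
    rw [Set.ncard_add_ncard_compl, Nat.card_eq_fintype_card]
  omega

end SteinerLP

open SteinerLP in
/-- with `𝒦` all nonempty subsets of a finite nonempty set `R`, the bounded
partition polytope equals the subtour polytope, as subsets of `ℝ^𝒦`. -/
theorem bounded_partition_polytope_eq_subtour_polytope {R : Type*} [Fintype R] [Nonempty R] :
    {x : Set R → ℝ |
        (∀ K ∈ Finset.univ.filter (fun K : Set R => K.Nonempty), 0 ≤ x K) ∧
        (∀ π : Setoid R, (nparts π : ℝ) - 1 ≤
          ∑ K ∈ Finset.univ.filter (fun K : Set R => K.Nonempty), x K * rc π K) ∧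
        ∑ K ∈ Finset.univ.filter (fun K : Set R => K.Nonempty), x K * ((K.ncard : ℝ) - 1) =
          (Fintype.card R : ℝ) - 1} =
    {x : Set R → ℝ |
        (∀ K ∈ Finset.univ.filter (fun K : Set R => K.Nonempty), 0 ≤ x K) ∧
        (∀ S : Set R, S ≠ Set.univ →
          ∑ K ∈ Finset.univ.filter (fun K : Set R => K.Nonempty), x K * rho (K ∩ S) ≤
            (rho S : ℝ)) ∧
        ∑ K ∈ Finset.univ.filter (fun K : Set R => K.Nonempty), x K * rho K =
          (rho (Set.univ : Set R) : ℝ)} := by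
  classical
  ext x
  simp only [Set.mem_setOf_eq]
  have hrho_univ : (rho (Set.univ : Set R) : ℝ) = (Fintype.card R : ℝ) - 1 := by
    rw [rho_cast _ (Set.toFinite _) Set.univ_nonempty, Set.ncard_univ, Nat.card_eq_fintype_card]
  have hterm : ∀ K ∈ Finset.univ.filter (fun K : Set R => K.Nonempty),
      x K * ((K.ncard : ℝ) - 1) = x K * rho K := by
    intro K hK
    rw [rho_cast _ (Set.toFinite _) (Finset.mem_filter.mp hK).2]
  constructor
  · rintro ⟨hx, hpart, heq⟩
    refine ⟨hx, ?_, by rw [← Finset.sum_congr rfl hterm, heq, hrho_univ]⟩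
    intro S hS
    by_cases hSne : S.Nonempty
    · obtain ⟨a₀, ha₀⟩ := hSne
      have hsum_c : ∀ K : Set R, ∑ c : Quotient (sing S), ((rho (K ∩ classOf (sing S) c) : ℝ))
          = (rho (K ∩ S) : ℝ) := by
        intro K
        rw [Finset.sum_eq_single (Quotient.mk (sing S) a₀)]
        · rw [classOf_sing_mem ha₀]
        · intro c _ hc
          obtain ⟨b, hb, hcb⟩ := classOf_sing_ne ha₀ hc
          have h0 : rho (K ∩ classOf (sing S) c) = 0 := by
            apply rho_eq_zero
            rw [hcb]
            calc (K ∩ {b}).ncard ≤ ({b} : Set R).ncard :=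
                  Set.ncard_le_ncard Set.inter_subset_right (Set.toFinite _)
              _ = 1 := Set.ncard_singleton b
          rw [h0, Nat.cast_zero]
        · intro h; exact absurd (Finset.mem_univ _) h
      have hterm2 : ∀ K ∈ Finset.univ.filter (fun K : Set R => K.Nonempty),
          x K * (rho (K ∩ S) : ℝ)
            = x K * ((K.ncard : ℝ) - 1) - x K * (rc (sing S) K : ℝ) := by
        intro K hK
        rw [← hsum_c K, sum_rho_classes (sing S) K (Finset.mem_filter.mp hK).2]
        ring
      have hsum : ∑ K ∈ Finset.univ.filter (fun K : Set R => K.Nonempty),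
          x K * (rho (K ∩ S) : ℝ)
          = ((Fintype.card R : ℝ) - 1)
            - ∑ K ∈ Finset.univ.filter (fun K : Set R => K.Nonempty),
                x K * (rc (sing S) K : ℝ) := by
        rw [Finset.sum_congr rfl hterm2, Finset.sum_sub_distrib, heq]
      have hlb := hpart (sing S)
      have hnp := nparts_sing_ge (R := R) ha₀
      have hrS : (rho S : ℝ) = (S.ncard : ℝ) - 1 := rho_cast _ (Set.toFinite _) ⟨a₀, ha₀⟩
      have hnp' : (Fintype.card R : ℝ) + 1 ≤ (nparts (sing S) : ℝ) + (S.ncard : ℝ) := by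
        exact_mod_cast hnp
      rw [hsum, hrS]
      linarith
    · rw [Set.not_nonempty_iff_eq_empty] at hSne
      subst hSne
      have h0 : ∑ K ∈ Finset.univ.filter (fun K : Set R => K.Nonempty),
          x K * (rho (K ∩ (∅ : Set R)) : ℝ) = 0 :=
        Finset.sum_eq_zero (by intro K _; simp [rho])
      rw [h0]
      simp [rho]
  · rintro ⟨hx, hsub, heq⟩
    have heq' : ∑ K ∈ Finset.univ.filter (fun K : Set R => K.Nonempty),
        x K * ((K.ncard : ℝ) - 1) = (Fintype.card R : ℝ) - 1 := by
      rw [Finset.sum_congr rfl hterm, heq, hrho_univ]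
    refine ⟨hx, ?_, heq'⟩
    intro s
    by_cases hcard : Fintype.card (Quotient s) ≤ 1
    · have h1 : nparts s ≤ 1 := by rw [nparts, Nat.card_eq_fintype_card]; exact hcard
      have h2 : (nparts s : ℝ) ≤ 1 := by exact_mod_cast h1
      have h0 : (nparts s : ℝ) - 1 ≤ 0 := by linarith
      exact h0.trans (Finset.sum_nonneg fun K hK => mul_nonneg (hx K hK) (Nat.cast_nonneg _))
    · push_neg at hcard
      have hclass : ∀ c : Quotient s, classOf s c ≠ Set.univ := by
        intro c hcu
        have hall : ∀ d : Quotient s, d = c := by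
          intro d
          obtain ⟨b, rfl⟩ := Quotient.exists_rep d
          have hb : b ∈ classOf s c := hcu ▸ Set.mem_univ b
          exact hb
        have h1 : Fintype.card (Quotient s) ≤ 1 :=
          Fintype.card_le_one_iff.mpr fun a b => (hall a).trans (hall b).symm
        omega
      have hbound : ∀ c : Quotient s,
          ∑ K ∈ Finset.univ.filter (fun K : Set R => K.Nonempty),
            x K * (rho (K ∩ classOf s c) : ℝ) ≤ ((classOf s c).ncard : ℝ) - 1 := by
        intro c
        have h := hsub _ (hclass c)
        rwa [rho_cast _ (Set.toFinite _) (classOf_nonempty s c)] at h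
      have hsum_classes : ∑ c : Quotient s, (((classOf s c).ncard : ℝ) - 1)
          = (Fintype.card R : ℝ) - nparts s := by
        rw [Finset.sum_sub_distrib, Finset.sum_const, nsmul_eq_mul, mul_one]
        have h2 := sum_ncard_inter_classOf s (Set.univ)
        simp only [Set.univ_inter] at h2
        rw [← Nat.cast_sum, h2, Set.ncard_univ, Nat.card_eq_fintype_card, Finset.card_univ,
          nparts, Nat.card_eq_fintype_card]
      have htot : ∑ c : Quotient s, ∑ K ∈ Finset.univ.filter (fun K : Set R => K.Nonempty),
          x K * (rho (K ∩ classOf s c) : ℝ) ≤ (Fintype.card R : ℝ) - nparts s := by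
        rw [← hsum_classes]
        exact Finset.sum_le_sum fun c _ => hbound c
      rw [key s x, heq']
      linarith
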